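/- The series identity ∑_{k=0}^∞ (C(2k,k)·C(4k,2k)/(-192)^k)·(2H_{4k} - H_{2k}) = (1/2)·log(3/4) · ∑_{k=0}^∞ C(2k,k)·C(4k,2k)/(-192)^k holds, both series being convergent. -/

import Mathlib

/-- The `n`-th harmonic number `H_n = ∑_{i=1}^n 1/i`. -/
noncomputable def harm (n : ℕ) : ℝ := ∑ i ∈ Finset.range n, 1 / (i + 1 : ℝ)

noncomputable def Bc (k : ℕ) : ℝ := (Nat.choose (2*k) k : ℝ) * (Nat.choose (4*k) (2*k) : ℝ)
noncomputable def cc (n : ℕ) : ℝ := 2 * harm (4*n) - harm (2*n)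
noncomputable def rr (n : ℕ) : ℝ := ∑ i ∈ Finset.range n, (64:ℝ)^(i+1) / ((i:ℝ)+1) * Bc (n - (i+1))
noncomputable def pp (n m : ℝ) : ℝ :=
  -24 + 140*m - 192*m^2 + 64*m^3 - 152*n + 448*n*m - 256*n*m^2 - 256*n^2 + 320*n^2*m - 128*n^3
noncomputable def aa (k : ℕ) : ℝ := Bc k * (-1/192 : ℝ)^k
noncomputable def ff : ℕ → ℝ
  | 0 => 0
  | (k+1) => (1/2) * (-1/3 : ℝ)^(k+1) / ((k:ℝ)+1)


lemma Bc_pos (k : ℕ) : 0 < Bc k := by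
  have h1 : 0 < Nat.choose (2*k) k := Nat.choose_pos (by omega)
  have h2 : 0 < Nat.choose (4*k) (2*k) := Nat.choose_pos (by omega)
  exact mul_pos (by exact_mod_cast h1) (by exact_mod_cast h2)

lemma Bc_zero : Bc 0 = 1 := by simp [Bc]

lemma Bc_one : Bc 1 = 12 := by norm_num [Bc, Nat.choose]

lemma Bc_fact (k : ℕ) :
    Bc k * ((Nat.factorial (2*k) : ℝ) * (Nat.factorial k : ℝ)^2) = (Nat.factorial (4*k) : ℝ) := by
  have h1 := Nat.choose_mul_factorial_mul_factorial (show k ≤ 2*k by omega)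
  have h2 := Nat.choose_mul_factorial_mul_factorial (show 2*k ≤ 4*k by omega)
  rw [show 2*k - k = k by omega] at h1
  rw [show 4*k - 2*k = 2*k by omega] at h2
  have h1' : (Nat.choose (2*k) k : ℝ) * (Nat.factorial k : ℝ) * (Nat.factorial k : ℝ)
      = (Nat.factorial (2*k) : ℝ) := by exact_mod_cast congrArg (Nat.cast (R := ℝ)) h1
  have h2' : (Nat.choose (4*k) (2*k) : ℝ) * (Nat.factorial (2*k) : ℝ) * (Nat.factorial (2*k) : ℝ)
      = (Nat.factorial (4*k) : ℝ) := by exact_mod_cast congrArg (Nat.cast (R := ℝ)) h2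
  unfold Bc
  linear_combination ((Nat.choose (4*k) (2*k) : ℝ)) * (Nat.factorial (2*k) : ℝ) * h1' + h2'

lemma fact_cast_succ (m : ℕ) : (Nat.factorial (m+1) : ℝ) = ((m:ℝ)+1) * (Nat.factorial m : ℝ) := by
  rw [Nat.factorial_succ]; push_cast; ring

lemma Bc_rec (k : ℕ) : ((k:ℝ)+1)^2 * Bc (k+1) = 4*(4*(k:ℝ)+1)*(4*(k:ℝ)+3) * Bc k := by
  have hk := Bc_fact k
  have hk1 := Bc_fact (k+1)
  have e4 : (Nat.factorial (4*(k+1)) : ℝ)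
      = (4*(k:ℝ)+4)*(4*(k:ℝ)+3)*(4*(k:ℝ)+2)*(4*(k:ℝ)+1) * (Nat.factorial (4*k) : ℝ) := by
    rw [show 4*(k+1) = (4*k+3)+1 by ring, fact_cast_succ, show 4*k+3 = (4*k+2)+1 by ring,
      fact_cast_succ, show 4*k+2 = (4*k+1)+1 by ring, fact_cast_succ,
      show 4*k+1 = (4*k)+1 by ring, fact_cast_succ]
    push_cast; ring
  have e2 : (Nat.factorial (2*(k+1)) : ℝ)
      = (2*(k:ℝ)+2)*(2*(k:ℝ)+1) * (Nat.factorial (2*k) : ℝ) := by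
    rw [show 2*(k+1) = (2*k+1)+1 by ring, fact_cast_succ, show 2*k+1 = (2*k)+1 by ring,
      fact_cast_succ]
    push_cast; ring
  have e1 : (Nat.factorial (k+1) : ℝ) = ((k:ℝ)+1) * (Nat.factorial k : ℝ) := fact_cast_succ k
  rw [e4, e2, e1] at hk1
  have hf2 : (Nat.factorial (2*k) : ℝ) ≠ 0 := Nat.cast_ne_zero.mpr (Nat.factorial_ne_zero _)
  have hf1 : (Nat.factorial k : ℝ) ≠ 0 := Nat.cast_ne_zero.mpr (Nat.factorial_ne_zero _)
  have hk' : ((k:ℝ)+1) ≠ 0 := by positivity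
  have h2k1 : (2*(k:ℝ)+1) ≠ 0 := by positivity
  have h2k2 : (2*(k:ℝ)+2) ≠ 0 := by positivity
  apply mul_right_cancel₀ (b := ((2*(k:ℝ)+2)*(2*(k:ℝ)+1)*(Nat.factorial (2*k) : ℝ) * (Nat.factorial k : ℝ)^2))
    (by positivity)
  linear_combination hk1 - (4*(4*(k:ℝ)+1)*(4*(k:ℝ)+3)*(2*(k:ℝ)+2)*(2*(k:ℝ)+1)) * hk


lemma cc_succ (n : ℕ) : cc (n+1) = cc n + 2/(4*(n:ℝ)+1) + 2/(4*(n:ℝ)+3) := by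
  unfold cc harm
  rw [show 4*(n+1) = (4*n)+1+1+1+1 by ring, show 2*(n+1) = (2*n)+1+1 by ring]
  rw [Finset.sum_range_succ, Finset.sum_range_succ, Finset.sum_range_succ, Finset.sum_range_succ,
    Finset.sum_range_succ, Finset.sum_range_succ]
  push_cast
  have h1 : (4*(n:ℝ)+1) ≠ 0 := by positivity
  have h2 : (4*(n:ℝ)+2) ≠ 0 := by positivity
  have h3 : (4*(n:ℝ)+3) ≠ 0 := by positivity
  have h4 : (4*(n:ℝ)+4) ≠ 0 := by positivity
  have h5 : (2*(n:ℝ)+1) ≠ 0 := by positivity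
  have h6 : (2*(n:ℝ)+2) ≠ 0 := by positivity
  field_simp
  ring

lemma Bc_succ_div (l : ℕ) : Bc (l+1) = 4*(4*(l:ℝ)+1)*(4*(l:ℝ)+3) * Bc l / ((l:ℝ)+1)^2 := by
  have h := Bc_rec l
  have : ((l:ℝ)+1)^2 ≠ 0 := by positivity
  field_simp
  linear_combination h

lemma step (i l : ℕ) :
    ((i:ℝ)+(l:ℝ)+3)^2 * ((64:ℝ)^(i+1)/((i:ℝ)+1) * Bc (l+2))
      - 4*(4*((i:ℝ)+(l:ℝ)+2)+1)*(4*((i:ℝ)+(l:ℝ)+2)+3) * ((64:ℝ)^(i+1)/((i:ℝ)+1) * Bc (l+1))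
    = (64:ℝ)^(i+2) * Bc l * pp ((i:ℝ)+(l:ℝ)+2) ((i:ℝ)+2) / ((l:ℝ)+1)^2
      - (64:ℝ)^(i+1) * Bc (l+1) * pp ((i:ℝ)+(l:ℝ)+2) ((i:ℝ)+1) / ((l:ℝ)+2)^2 := by
  have e2 : Bc (l+2) = 4*(4*(l:ℝ)+5)*(4*(l:ℝ)+7) * Bc (l+1) / ((l:ℝ)+2)^2 := by
    have := Bc_succ_div (l+1); push_cast at this; convert this using 2 <;> push_cast <;> ring
  have e1 := Bc_succ_div l
  rw [e2, e1]
  unfold pp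
  have h1 : ((l:ℝ)+1) ≠ 0 := by positivity
  have h2 : ((l:ℝ)+2) ≠ 0 := by positivity
  have h3 : ((i:ℝ)+1) ≠ 0 := by positivity
  have h64 : (64:ℝ)^(i+2) = 64 * 64^(i+1) := by ring
  rw [h64]
  field_simp
  ring


lemma rr_rec (n : ℕ) :
    ((n:ℝ)+1)^2 * rr (n+1) = 4*(4*(n:ℝ)+1)*(4*(n:ℝ)+3) * rr n + 16*(8*(n:ℝ)+4) * Bc n := by
  rcases n with _ | N
  · simp [rr, Bc_zero]
    norm_num
  · set n := N + 1 with hn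
    -- F is the telescoping certificate
    set F : ℕ → ℝ := fun i =>
      (64:ℝ)^(i+1) * Bc (n - (i+1)) * pp (n:ℝ) ((i:ℝ)+1) / (((n - (i+1) : ℕ) : ℝ) + 1)^2 with hF
    have hsplit : rr (n+1) = (∑ i ∈ Finset.range n, (64:ℝ)^(i+1)/((i:ℝ)+1) * Bc (n - i))
        + (64:ℝ)^(n+1)/((n:ℝ)+1) * Bc 0 := by
      unfold rr
      rw [Finset.sum_range_succ]
      congr 1
      · apply Finset.sum_congr rfl
        intro i _
        congr 2
        omega
      · congr 2
        omega
    have hcomb : ((n:ℝ)+1)^2 * rr (n+1) - 4*(4*(n:ℝ)+1)*(4*(n:ℝ)+3) * rr n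
        = (∑ i ∈ Finset.range n,
            (((n:ℝ)+1)^2 * ((64:ℝ)^(i+1)/((i:ℝ)+1) * Bc (n - i))
              - 4*(4*(n:ℝ)+1)*(4*(n:ℝ)+3) * ((64:ℝ)^(i+1)/((i:ℝ)+1) * Bc (n - (i+1)))))
          + ((n:ℝ)+1)^2 * ((64:ℝ)^(n+1)/((n:ℝ)+1) * Bc 0) := by
      rw [hsplit]
      unfold rr
      rw [mul_add, Finset.mul_sum, Finset.mul_sum, Finset.sum_sub_distrib]
      ring
    have hterm : ∀ i ∈ Finset.range N,
        (((n:ℝ)+1)^2 * ((64:ℝ)^(i+1)/((i:ℝ)+1) * Bc (n - i))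
          - 4*(4*(n:ℝ)+1)*(4*(n:ℝ)+3) * ((64:ℝ)^(i+1)/((i:ℝ)+1) * Bc (n - (i+1))))
        = F (i+1) - F i := by
      intro i hi
      rw [Finset.mem_range] at hi
      obtain ⟨l, hl⟩ : ∃ l, n = i + l + 2 := ⟨N - 1 - i, by omega⟩
      have r1 : n - i = l + 2 := by omega
      have r2 : n - (i+1) = l + 1 := by omega
      have r3 : n - (i+1+1) = l := by omega
      have rc : (n:ℝ) = (i:ℝ) + (l:ℝ) + 2 := by rw [hl]; push_cast; ring
      rw [hF]
      simp only [r1, r2, r3, rc]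
      have := step i l
      push_cast
      convert this using 2 <;> push_cast <;> ring
    have htel : ∑ i ∈ Finset.range N, (F (i+1) - F i) = F N - F 0 := Finset.sum_range_sub F N
    have key : (∑ i ∈ Finset.range n,
            (((n:ℝ)+1)^2 * ((64:ℝ)^(i+1)/((i:ℝ)+1) * Bc (n - i))
              - 4*(4*(n:ℝ)+1)*(4*(n:ℝ)+3) * ((64:ℝ)^(i+1)/((i:ℝ)+1) * Bc (n - (i+1)))))
          + ((n:ℝ)+1)^2 * ((64:ℝ)^(n+1)/((n:ℝ)+1) * Bc 0)
        = 16*(8*(n:ℝ)+4) * Bc n := by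
      rw [show n = N + 1 from hn, Finset.sum_range_succ, ← hn]
      rw [Finset.sum_congr rfl hterm, htel]
      -- explicit values
      have vFN : F N = (64:ℝ)^n * pp (n:ℝ) (n:ℝ) := by
        rw [hF]
        simp only
        rw [show n - (N+1) = 0 by omega, Bc_zero]
        have : ((N:ℝ)+1) = (n:ℝ) := by rw [hn]; push_cast; ring
        rw [this]
        norm_num
        exact Or.inl hn.symm
      have vF0 : F 0 = 64 * Bc N * pp (n:ℝ) 1 / ((n:ℝ))^2 := by
        rw [hF]
        simp only
        rw [show n - (0+1) = N by omega]
        have : (((n - (0+1) : ℕ)):ℝ) + 1 = (n:ℝ) := by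
          rw [show n - (0+1) = N by omega, hn]; push_cast; ring
        rw [show n - (0+1) = N by omega] at this
        rw [this]
        norm_num
      have hub : n - N = 1 := by omega
      have hub2 : n - (N+1) = 0 := by omega
      rw [vFN, vF0, hub, hub2, Bc_zero, Bc_one]
      have hbn : Bc n = 4*(4*(N:ℝ)+1)*(4*(N:ℝ)+3) * Bc N / ((N:ℝ)+1)^2 := Bc_succ_div N
      rw [hbn]
      have hNc : (n:ℝ) = (N:ℝ)+1 := by rw [hn]; push_cast; ring
      rw [hNc]
      unfold pp
      have h1 : ((N:ℝ)+1) ≠ 0 := by positivity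
      have h64 : (64:ℝ)^(n+1) = 64 * 64^n := by ring
      have h64' : (64:ℝ)^n = (64:ℝ)^n := rfl
      rw [h64, hn]
      push_cast
      field_simp
      ring
    linarith [hcomb.trans key]


lemma rr_eq (n : ℕ) : rr n = 2 * Bc n * cc n := by
  induction n with
  | zero => simp [rr, cc, harm]
  | succ n ih =>
    have hpos : ((n:ℝ)+1)^2 ≠ 0 := by positivity
    apply mul_left_cancel₀ hpos
    rw [rr_rec n, ih, cc_succ n, Bc_succ_div n]
    have h1 : (4*(n:ℝ)+1) ≠ 0 := by positivity
    have h3 : (4*(n:ℝ)+3) ≠ 0 := by positivity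
    have h2 : ((n:ℝ)+1) ≠ 0 := by positivity
    field_simp
    ring


lemma choose_le_two_pow (n k : ℕ) : Nat.choose n k ≤ 2^n := by
  rcases le_or_gt k n with h | h
  · calc Nat.choose n k ≤ ∑ m ∈ Finset.range (n+1), Nat.choose n m :=
        Finset.single_le_sum (f := fun m => Nat.choose n m) (fun _ _ => Nat.zero_le _)
          (Finset.mem_range.mpr (by omega))
      _ = 2^n := Nat.sum_range_choose n
  · simp [Nat.choose_eq_zero_of_lt h]

lemma Bc_le (k : ℕ) : Bc k ≤ (64:ℝ)^k := by
  have h1 : (Nat.choose (2*k) k : ℝ) ≤ (2:ℝ)^(2*k) := by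
    exact_mod_cast Nat.cast_le.mpr (choose_le_two_pow (2*k) k)
  have h2 : (Nat.choose (4*k) (2*k) : ℝ) ≤ (2:ℝ)^(4*k) := by
    exact_mod_cast Nat.cast_le.mpr (choose_le_two_pow (4*k) (2*k))
  have := mul_le_mul h1 h2 (by positivity) (by positivity)
  calc Bc k ≤ (2:ℝ)^(2*k) * (2:ℝ)^(4*k) := this
    _ = (64:ℝ)^k := by
      rw [← pow_add, show (64:ℝ) = 2^6 by norm_num, ← pow_mul]
      congr 1
      omega

lemma aa_abs (k : ℕ) : |aa k| ≤ (1/3:ℝ)^k := by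
  have : |aa k| = Bc k * (1/192:ℝ)^k := by
    rw [aa, abs_mul, abs_pow, abs_of_pos (Bc_pos k),
      show |(-1/192 : ℝ)| = 1/192 by norm_num]
  rw [this]
  calc Bc k * (1/192:ℝ)^k ≤ (64:ℝ)^k * (1/192:ℝ)^k :=
      mul_le_mul_of_nonneg_right (Bc_le k) (by positivity)
    _ = (1/3:ℝ)^k := by rw [← mul_pow]; norm_num

lemma harm_nonneg (n : ℕ) : 0 ≤ harm n := by
  unfold harm; positivity

lemma harm_mono {m n : ℕ} (h : m ≤ n) : harm m ≤ harm n := by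
  unfold harm
  apply Finset.sum_le_sum_of_subset_of_nonneg
  · exact Finset.range_subset_range.mpr h
  · intro i _ _; positivity

lemma harm_le (n : ℕ) : harm n ≤ n := by
  unfold harm
  have h : ∀ i ∈ Finset.range n, 1/((i:ℝ)+1) ≤ 1 := by
    intro i _
    rw [div_le_one (by positivity)]
    linarith [Nat.cast_nonneg (α := ℝ) i]
  calc ∑ i ∈ Finset.range n, 1 / ((i:ℝ) + 1) ≤ ∑ _i ∈ Finset.range n, (1:ℝ) :=
      Finset.sum_le_sum h
    _ = n := by simp

lemma cc_nonneg (k : ℕ) : 0 ≤ cc k := by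
  have h1 := harm_mono (show 2*k ≤ 4*k by omega)
  have h2 := harm_nonneg (4*k)
  unfold cc; linarith

lemma cc_le (k : ℕ) : cc k ≤ 8*k := by
  have h1 := harm_le (4*k)
  have h2 := harm_nonneg (2*k)
  unfold cc
  push_cast at h1 ⊢
  linarith

lemma summable_norm_aa : Summable (fun k => ‖aa k‖) := by
  apply Summable.of_nonneg_of_le (fun _ => norm_nonneg _) (fun k => aa_abs k)
  exact summable_geometric_of_lt_one (by norm_num) (by norm_num)

lemma summable_norm_ff : Summable (fun k => ‖ff k‖) := by
  apply Summable.of_nonneg_of_le (fun _ => norm_nonneg _) (fun k => ?_)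
    (summable_geometric_of_lt_one (show (0:ℝ) ≤ 1/3 by norm_num) (by norm_num))
  rcases k with _ | k
  · simp [ff]
  · show |(1/2) * (-1/3 : ℝ)^(k+1) / ((k:ℝ)+1)| ≤ (1/3:ℝ)^(k+1)
    rw [abs_div, abs_mul, abs_pow]
    have h1 : |(-1/3 : ℝ)| = 1/3 := by norm_num
    have h2 : |((k:ℝ)+1)| = (k:ℝ)+1 := abs_of_pos (by positivity)
    rw [h1, h2, show |(1/2 : ℝ)| = 1/2 by norm_num]
    have hk1 : (1:ℝ) ≤ (k:ℝ)+1 := by linarith [Nat.cast_nonneg (α := ℝ) k]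
    rw [div_le_iff₀ (by positivity)]
    have hp : (0:ℝ) ≤ (1/3:ℝ)^(k+1) := by positivity
    nlinarith

lemma summable_aacc : Summable (fun k => aa k * cc k) := by
  apply Summable.of_norm
  apply Summable.of_nonneg_of_le (fun _ => norm_nonneg _) (fun k => ?_)
    ((summable_pow_mul_geometric_of_norm_lt_one 1 (show ‖(1/3:ℝ)‖ < 1 by norm_num)).mul_left 8)
  show |aa k * cc k| ≤ 8 * ((k:ℝ)^1 * (1/3:ℝ)^k)
  rw [abs_mul, abs_of_nonneg (cc_nonneg k), pow_one]
  calc |aa k| * cc k ≤ (1/3:ℝ)^k * (8*k) :=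
      mul_le_mul (aa_abs k) (cc_le k) (cc_nonneg k) (by positivity)
    _ = 8 * ((k:ℝ) * (1/3:ℝ)^k) := by ring

lemma hasSum_ff : HasSum ff ((1/2 : ℝ) * Real.log (3/4)) := by
  have h := Real.hasSum_pow_div_log_of_abs_lt_one (x := (-1/3 : ℝ)) (by rw [abs_div]; norm_num)
  have hlog : -Real.log (1 - (-1/3 : ℝ)) = (1/2 : ℝ)⁻¹ * ((1/2 : ℝ) * Real.log (3/4)) := by
    rw [show (1 - (-1/3 : ℝ)) = 4/3 by norm_num]
    rw [show (3/4 : ℝ) = (4/3 : ℝ)⁻¹ by norm_num, Real.log_inv]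
    ring
  rw [hlog] at h
  have h2 := h.mul_left (1/2 : ℝ)
  rw [mul_inv_cancel_left₀ (by norm_num : (1/2:ℝ) ≠ 0)] at h2
  have heq : (fun n : ℕ => (1/2:ℝ) * ((-1/3:ℝ)^(n+1)/((n:ℝ)+1))) = (fun n => ff (n+1)) := by
    funext n
    show _ = (1/2) * (-1/3 : ℝ)^(n+1) / ((n:ℝ)+1)
    ring
  have h3 : HasSum (fun n => ff (n+1)) ((1/2 : ℝ) * Real.log (3/4)) := heq ▸ h2
  have h4 := (hasSum_nat_add_iff (f := ff) 1).mp h3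
  simpa [ff] using h4


lemma conv (n : ℕ) : ∑ k ∈ Finset.range (n+1), ff k * aa (n - k) = aa n * cc n := by
  rw [Finset.sum_range_succ']
  have h0 : ff 0 * aa (n - 0) = 0 := by simp [ff]
  rw [h0, add_zero]
  have hterm : ∀ i ∈ Finset.range n,
      ff (i+1) * aa (n - (i+1))
        = (-1/192 : ℝ)^n * (1/2) * ((64:ℝ)^(i+1)/((i:ℝ)+1) * Bc (n - (i+1))) := by
    intro i hi
    rw [Finset.mem_range] at hi
    show (1/2) * (-1/3 : ℝ)^(i+1) / ((i:ℝ)+1) * (Bc (n-(i+1)) * (-1/192 : ℝ)^(n-(i+1))) = _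
    have e1 : (-1/3 : ℝ)^(i+1) = 64^(i+1) * (-1/192 : ℝ)^(i+1) := by
      rw [← mul_pow]; norm_num
    have e2 : (-1/192 : ℝ)^(i+1) * (-1/192 : ℝ)^(n-(i+1)) = (-1/192 : ℝ)^n := by
      rw [← pow_add]
      congr 1
      omega
    rw [e1]
    calc 1 / 2 * ((64:ℝ)^(i+1) * (-1/192:ℝ)^(i+1)) / ((i:ℝ)+1)
          * (Bc (n-(i+1)) * (-1/192 : ℝ)^(n-(i+1)))
        = ((-1/192 : ℝ)^(i+1) * (-1/192 : ℝ)^(n-(i+1))) * (1/2)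
            * ((64:ℝ)^(i+1)/((i:ℝ)+1) * Bc (n-(i+1))) := by ring
      _ = _ := by rw [e2]
  rw [Finset.sum_congr rfl hterm, ← Finset.mul_sum]
  have : ∑ i ∈ Finset.range n, ((64:ℝ)^(i+1)/((i:ℝ)+1) * Bc (n - (i+1))) = rr n := rfl
  rw [this, rr_eq n, aa]
  ring

theorem stmt_1 :
    Summable (fun k : ℕ =>
      ((Nat.choose (2 * k) k : ℝ) * (Nat.choose (4 * k) (2 * k) : ℝ) / (-192 : ℝ) ^ k) *
        (2 * harm (4 * k) - harm (2 * k))) ∧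
    Summable (fun k : ℕ =>
      (Nat.choose (2 * k) k : ℝ) * (Nat.choose (4 * k) (2 * k) : ℝ) / (-192 : ℝ) ^ k) ∧
    ∑' k : ℕ, ((Nat.choose (2 * k) k : ℝ) * (Nat.choose (4 * k) (2 * k) : ℝ) / (-192 : ℝ) ^ k) *
        (2 * harm (4 * k) - harm (2 * k)) =
      (1 / 2 : ℝ) * Real.log (3 / 4) *
        ∑' k : ℕ, (Nat.choose (2 * k) k : ℝ) * (Nat.choose (4 * k) (2 * k) : ℝ) / (-192 : ℝ) ^ k := by
  have hform : ∀ k : ℕ,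
      (Nat.choose (2 * k) k : ℝ) * (Nat.choose (4 * k) (2 * k) : ℝ) / (-192 : ℝ) ^ k = aa k := by
    intro k
    rw [aa, Bc, div_eq_mul_inv, ← inv_pow]
    norm_num
  have hform2 : ∀ k : ℕ,
      ((Nat.choose (2 * k) k : ℝ) * (Nat.choose (4 * k) (2 * k) : ℝ) / (-192 : ℝ) ^ k) *
        (2 * harm (4 * k) - harm (2 * k)) = aa k * cc k := by
    intro k
    rw [hform k, cc]
  refine ⟨?_, ?_, ?_⟩
  · exact Summable.congr summable_aacc (fun k => (hform2 k).symm)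
  · exact Summable.congr summable_norm_aa.of_norm (fun k => (hform k).symm)
  · rw [tsum_congr hform2, tsum_congr hform]
    have hcauchy := tsum_mul_tsum_eq_tsum_sum_range_of_summable_norm
      (f := ff) (g := aa) summable_norm_ff summable_norm_aa
    rw [tsum_congr conv] at hcauchy
    rw [← hcauchy, hasSum_ff.tsum_eq]
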